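/- Let G be a finite-dimensional real Lie group (a smooth manifold with smooth group operations) and let σ_1, σ_2 : ℝ → G be smooth curves. For a smooth curve σ, let ω(σ'(t)) ∈ T_e G denote the image of the velocity vector σ'(t) ∈ T_{σ(t)}G under the differential at σ(t) of the left translation by σ(t)^{−1} (the Maurer–Cartan form applied to the tangent vector). Then there exists γ ∈ G with σ_1(t) = γ · σ_2(t) for all t ∈ ℝ if and only if ω(σ_1'(t)) = ω(σ_2'(t)) for all t ∈ ℝ. -/

import Mathlib

open scoped Manifold

section Helpers

variable {E : Type*} [NormedAddCommGroup E] [NormedSpace ℝ E]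
    {H : Type*} [TopologicalSpace H] {I : ModelWithCorners ℝ E H}
    {G : Type*} [TopologicalSpace G] [ChartedSpace H G] [Group G] [LieGroup I (⊤ : ℕ∞) G]

/-- Composition rule for differentials of left translations. -/
lemma mfderiv_mul_left_mul_left (a b : G) {x : G} (v : E) :
    mfderiv I I (fun h => a * h) (b * x) (mfderiv I I (fun h => b * h) x v)
      = mfderiv I I (fun h => (a * b) * h) x v := by
  have hcomp : (fun h => (a * b) * h) = (fun h => a * h) ∘ (fun h => b * h) := by
    funext h; simp [mul_assoc]
  rw [hcomp, mfderiv_comp x ((contMDiff_mul_left (n := (⊤ : ℕ∞))).mdifferentiableAt (by simp))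
    ((contMDiff_mul_left (n := (⊤ : ℕ∞))).mdifferentiableAt (by simp))]
  rfl

/-- Composition rule for differentials of right translations. -/
lemma mfderiv_mul_right_mul_right (a b : G) {x : G} (v : E) :
    mfderiv I I (fun h => h * a) (x * b) (mfderiv I I (fun h => h * b) x v)
      = mfderiv I I (fun h => h * (b * a)) x v := by
  have hcomp : (fun h => h * (b * a)) = (fun h => h * a) ∘ (fun h => h * b) := by
    funext h; simp [mul_assoc]
  rw [hcomp, mfderiv_comp x ((contMDiff_mul_right (n := (⊤ : ℕ∞))).mdifferentiableAt (by simp))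
    ((contMDiff_mul_right (n := (⊤ : ℕ∞))).mdifferentiableAt (by simp))]
  rfl

lemma mfderiv_mul_left_one (x : G) (v : E) :
    mfderiv I I (fun h => (1 : G) * h) x v = v := by
  have : (fun h : G => (1 : G) * h) = id := by funext h; simp
  rw [this, mfderiv_id]
  rfl

lemma mfderiv_mul_right_one (x : G) (v : E) :
    mfderiv I I (fun h => h * (1 : G)) x v = v := by
  have : (fun h : G => h * (1 : G)) = id := by funext h; simp
  rw [this, mfderiv_id]
  rfl

/-- Product rule for curves in a Lie group. -/
lemma mfderiv_curve_mul (f g : ℝ → G) (hf : ContMDiff 𝓘(ℝ, ℝ) I (⊤ : ℕ∞) f)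
    (hg : ContMDiff 𝓘(ℝ, ℝ) I (⊤ : ℕ∞) g) (t : ℝ) :
    (mfderiv 𝓘(ℝ, ℝ) I (fun s => f s * g s) t (1 : ℝ) : E)
      = mfderiv I I (fun h => h * g t) (f t) (mfderiv 𝓘(ℝ, ℝ) I f t (1 : ℝ))
        + mfderiv I I (fun h => f t * h) (g t) (mfderiv 𝓘(ℝ, ℝ) I g t (1 : ℝ)) := by
  have hmul : MDifferentiableAt (I.prod I) I (fun p : G × G => p.1 * p.2) (f t, g t) :=
    (contMDiff_mul I (⊤ : ℕ∞) (G := G)).mdifferentiableAt (by simp)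
  have hft := (hf t).mdifferentiableAt (by simp)
  have hgt := (hg t).mdifferentiableAt (by simp)
  have hcomp : (fun s => f s * g s)
      = (fun p : G × G => p.1 * p.2) ∘ (fun s => (f s, g s)) := rfl
  rw [hcomp, mfderiv_comp t hmul (hft.prodMk hgt)]
  erw [ContinuousLinearMap.comp_apply,
    hft.mfderiv_prod hgt]
  exact mfderiv_prod_eq_add_apply hmul

/-- A smooth curve with vanishing derivative into a manifold is constant. -/
lemma eq_of_mfderiv_eq_zero {M : Type*} [TopologicalSpace M] [ChartedSpace H M]
    [IsManifold I (⊤ : ℕ∞) M] (v : ℝ → M) (hv : ContMDiff 𝓘(ℝ, ℝ) I (⊤ : ℕ∞) v)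
    (h : ∀ t, mfderiv 𝓘(ℝ, ℝ) I v t = 0) (s t : ℝ) : v s = v t := by
  have key : ∀ t₀ : ℝ, ∀ᶠ u in nhds t₀, v u = v t₀ := by
    intro t₀
    set φ := extChartAt I (v t₀) with hφ
    have hsrc : IsOpen (v ⁻¹' (chartAt H (v t₀)).source) :=
      (chartAt H (v t₀)).open_source.preimage hv.continuous
    have ht₀ : t₀ ∈ v ⁻¹' (chartAt H (v t₀)).source := by
      simp [mem_chart_source]
    obtain ⟨ε, hε, hball⟩ := Metric.isOpen_iff.mp hsrc t₀ ht₀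
    have hderiv : ∀ u ∈ Metric.ball t₀ ε,
        HasFDerivWithinAt (fun w => φ (v w)) (0 : ℝ →L[ℝ] E) (Metric.ball t₀ ε) u := by
      intro u hu
      have hmem : v u ∈ (chartAt H (v t₀)).source := hball hu
      have h1 : HasMFDerivAt 𝓘(ℝ, ℝ) I v u (0 : ℝ →L[ℝ] E) := by
        have := ((hv u).mdifferentiableAt (by simp)).hasMFDerivAt
        rwa [h u] at this
      have h2 := (hasMFDerivAt_extChartAt (I := I) hmem).comp u h1
      erw [ContinuousLinearMap.comp_zero] at h2
      exact (hasMFDerivAt_iff_hasFDerivAt.mp h2).hasFDerivWithinAt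
    have hconst : ∀ u ∈ Metric.ball t₀ ε, φ (v u) = φ (v t₀) := by
      intro u hu
      have := (convex_ball t₀ ε).norm_image_sub_le_of_norm_hasFDerivWithin_le
        (C := 0) hderiv (fun x _ => by simp) (Metric.mem_ball_self hε) hu
      have h0' : ‖φ (v u) - φ (v t₀)‖ ≤ 0 := by simpa using this
      exact sub_eq_zero.mp (norm_le_zero_iff.mp h0')
    filter_upwards [Metric.ball_mem_nhds t₀ hε] with u hu
    exact (extChartAt I (v t₀)).injOn (by simpa [extChartAt_source] using hball hu)
      (by simp [extChartAt_source, mem_chart_source]) (hconst u hu)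
  -- clopen argument
  have hclopen : IsClopen {u : ℝ | v u = v t} := by
    constructor
    · rw [← isOpen_compl_iff]
      refine isOpen_iff_mem_nhds.mpr fun u hu => ?_
      filter_upwards [key u] with w hw hww
      exact hu (by simpa [Set.mem_setOf_eq, hw] using hww)
    · refine isOpen_iff_mem_nhds.mpr fun u hu => ?_
      filter_upwards [key u] with w hw
      simp only [Set.mem_setOf_eq] at hu ⊢
      rw [hw, hu]
  rcases isClopen_iff.mp hclopen with h0 | h1
  · have ht : t ∈ {u : ℝ | v u = v t} := rfl
    rw [h0] at ht
    exact absurd ht (Set.notMem_empty t)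
  · simpa using (Set.eq_univ_iff_forall.mp h1 s)

end Helpers

/-- **Curves in a Lie group are left-congruent iff they have the same Maurer–Cartan
velocities** (Proposition `left_invariant_metric`): for smooth curves
`σ₁, σ₂ : ℝ → G` into a finite-dimensional real Lie group `G`, there is `γ ∈ G` with
`σ₁(t) = γ · σ₂(t)` for all `t` iff `ω(σ₁'(t)) = ω(σ₂'(t))` for all `t`, where the
Maurer–Cartan form `ω` applied to the velocity `σ'(t)` is the image of
`σ'(t) ∈ T_{σ(t)}G` under the differential at `σ(t)` of left translation by
`σ(t)⁻¹`. -/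
theorem curves_left_congruent_iff_maurer_cartan_eq
    {E : Type*} [NormedAddCommGroup E] [NormedSpace ℝ E] [FiniteDimensional ℝ E]
    {H : Type*} [TopologicalSpace H] (I : ModelWithCorners ℝ E H)
    {G : Type*} [TopologicalSpace G] [ChartedSpace H G] [Group G] [LieGroup I (⊤ : ℕ∞) G]
    (σ₁ σ₂ : ℝ → G)
    (hσ₁ : ContMDiff 𝓘(ℝ, ℝ) I (⊤ : ℕ∞) σ₁)
    (hσ₂ : ContMDiff 𝓘(ℝ, ℝ) I (⊤ : ℕ∞) σ₂) :
    (∃ γ : G, ∀ t : ℝ, σ₁ t = γ * σ₂ t)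
      ↔
    (∀ t : ℝ,
      (mfderiv I I (fun h => (σ₁ t)⁻¹ * h) (σ₁ t)
          (mfderiv 𝓘(ℝ, ℝ) I σ₁ t (1 : ℝ)) : E)
        = (mfderiv I I (fun h => (σ₂ t)⁻¹ * h) (σ₂ t)
            (mfderiv 𝓘(ℝ, ℝ) I σ₂ t (1 : ℝ)) : E)) := by
  constructor
  · rintro ⟨γ, hγ⟩ t
    have hσeq : σ₁ = (fun h => γ * h) ∘ σ₂ := funext hγ
    have hd : (mfderiv 𝓘(ℝ, ℝ) I σ₁ t (1 : ℝ) : E)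
        = mfderiv I I (fun h => γ * h) (σ₂ t) (mfderiv 𝓘(ℝ, ℝ) I σ₂ t (1 : ℝ)) := by
      rw [hσeq, mfderiv_comp t ((contMDiff_mul_left (n := (⊤ : ℕ∞))).mdifferentiableAt (by simp))
        ((hσ₂ t).mdifferentiableAt (by simp))]
      rfl
    rw [hd, hγ t]
    erw [mfderiv_mul_left_mul_left]
    have hab : (γ * σ₂ t)⁻¹ * γ = (σ₂ t)⁻¹ := by
      rw [mul_inv_rev, mul_assoc, inv_mul_cancel, mul_one]
    rw [hab]
  · intro h
    set v := fun s => σ₁ s * (σ₂ s)⁻¹ with hv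
    have hvsm : ContMDiff 𝓘(ℝ, ℝ) I (⊤ : ℕ∞) v := hσ₁.mul hσ₂.inv
    have hveq : ∀ s, v s * σ₂ s = σ₁ s := fun s => inv_mul_cancel_right _ _
    have hstar : ∀ t, (mfderiv 𝓘(ℝ, ℝ) I σ₁ t (1 : ℝ) : E)
        = mfderiv I I (fun h => v t * h) (σ₂ t) (mfderiv 𝓘(ℝ, ℝ) I σ₂ t (1 : ℝ)) := by
      intro t
      have h1 := congrArg (mfderiv I I (fun h => σ₁ t * h) (1 : G)) (h t)
      have e1 : mfderiv I I (fun h => σ₁ t * h) (1 : G)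
          (mfderiv I I (fun h => (σ₁ t)⁻¹ * h) (σ₁ t) (mfderiv 𝓘(ℝ, ℝ) I σ₁ t (1 : ℝ)))
          = mfderiv 𝓘(ℝ, ℝ) I σ₁ t (1 : ℝ) := by
        have hb : (1 : G) = (σ₁ t)⁻¹ * σ₁ t := (inv_mul_cancel _).symm
        rw [hb]
        erw [mfderiv_mul_left_mul_left]
        rw [mul_inv_cancel]
        erw [mfderiv_mul_left_one]
      have e2 : mfderiv I I (fun h => σ₁ t * h) (1 : G)
          (mfderiv I I (fun h => (σ₂ t)⁻¹ * h) (σ₂ t) (mfderiv 𝓘(ℝ, ℝ) I σ₂ t (1 : ℝ)))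
          = mfderiv I I (fun h => v t * h) (σ₂ t) (mfderiv 𝓘(ℝ, ℝ) I σ₂ t (1 : ℝ)) := by
        have hb : (1 : G) = (σ₂ t)⁻¹ * σ₂ t := (inv_mul_cancel _).symm
        rw [hb]
        erw [mfderiv_mul_left_mul_left]
      rw [e1, e2] at h1
      exact h1
    have hzero : ∀ t, mfderiv 𝓘(ℝ, ℝ) I v t = 0 := by
      intro t
      have hprod := mfderiv_curve_mul v σ₂ hvsm hσ₂ t
      have hveq' : (fun s => v s * σ₂ s) = σ₁ := funext hveq
      rw [hveq'] at hprod
      have hz : mfderiv I I (fun h => h * σ₂ t) (v t) (mfderiv 𝓘(ℝ, ℝ) I v t (1 : ℝ))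
          = 0 := add_eq_right.mp (hprod.symm.trans (hstar t))
      have h2 := congrArg (mfderiv I I (fun h => h * (σ₂ t)⁻¹) (v t * σ₂ t)) hz
      erw [mfderiv_mul_right_mul_right] at h2
      rw [mul_inv_cancel] at h2
      erw [mfderiv_mul_right_one, map_zero] at h2
      refine ContinuousLinearMap.ext_ring ?_
      exact h2
    exact ⟨v 0, fun t => by rw [← hveq t, eq_of_mfderiv_eq_zero v hvsm hzero t 0]⟩
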